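/- arXiv:1209.0850 — 6 statements merged into one kernel-verified Lean document; each statement's English description precedes it below -/
import Mathlib

section
/- For R(z) = z^2 + 1 and every n ≥ 1, the set {z ∈ ℂ : R^n(z) = 0} has exactly 2^n elements. -/
open Polynomial

private noncomputable def pcx : ℕ → ℂ[X]
  | 0 => X
  | n + 1 => (pcx n) ^ 2 + 1

private lemma pcx_eval (n : ℕ) (z : ℂ) :
    (pcx n).eval z = (fun w : ℂ => w ^ 2 + 1)^[n] z := by
  induction n with
  | zero => simp [pcx]
  | succ n ih =>
    rw [Function.iterate_succ_apply', pcx]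
    simp [ih]

private lemma pcx_natDegree (n : ℕ) : (pcx n).natDegree = 2 ^ n := by
  induction n with
  | zero => simp [pcx]
  | succ n ih =>
    have h1 : ((pcx n) ^ 2).natDegree = 2 ^ (n + 1) := by
      rw [natDegree_pow, ih]; ring
    have hpos : 0 < ((pcx n) ^ 2).natDegree := by rw [h1]; positivity
    rw [pcx, show (1 : ℂ[X]) = C 1 by simp, natDegree_add_C, h1]

private lemma pcx_ne_zero (n : ℕ) : pcx n ≠ 0 := by
  intro h
  have := pcx_natDegree n
  rw [h, natDegree_zero] at this
  exact pow_ne_zero n (by norm_num : (2:ℕ) ≠ 0) this.symm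

private lemma pcx_deriv (n : ℕ) (z : ℂ) (h : ((pcx n).derivative).eval z = 0) :
    ∃ r : ℝ, 1 ≤ r ∧ (pcx n).eval z = r := by
  induction n with
  | zero => simp [pcx] at h
  | succ n ih =>
    have hd : ((pcx (n + 1)).derivative).eval z
        = 2 * (pcx n).eval z * ((pcx n).derivative).eval z := by
      rw [pcx]
      simp [derivative_pow]
    rw [hd] at h
    rcases mul_eq_zero.mp h with h1 | h2
    · rcases mul_eq_zero.mp h1 with h0 | hz
      · norm_num at h0
      · refine ⟨1, le_refl 1, ?_⟩
        rw [pcx]; simp [hz]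
    · obtain ⟨r, hr1, hr2⟩ := ih h2
      refine ⟨r ^ 2 + 1, by nlinarith, ?_⟩
      rw [pcx]
      simp only [eval_add, eval_pow, eval_one, hr2]
      push_cast
      ring

private lemma pcx_separable (n : ℕ) : (pcx n).Separable := by
  rw [Polynomial.Separable]
  rw [Polynomial.isCoprime_iff_aeval_ne_zero_of_isAlgClosed (k := ℂ) ℂ (pcx n)
    (derivative (pcx n))]
  intro a
  by_contra hcon
  push_neg at hcon
  obtain ⟨h1, h2⟩ := hcon
  simp only [aeval_def, eval₂_eq_eval_map, Algebra.algebraMap_self, Polynomial.map_id] at h1 h2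
  obtain ⟨r, hr1, hr2⟩ := pcx_deriv n a (by simpa using h2)
  rw [hr2] at h1
  have : r = 0 := by exact_mod_cast h1
  linarith

/-- For `R(z) = z^2 + 1` and every `n ≥ 1`, the set `{z : ℂ | R^[n] z = 0}`
has exactly `2 ^ n` elements. -/
theorem stmt_1 (n : ℕ) (hn : 1 ≤ n) :
    Set.ncard {z : ℂ | (fun w : ℂ => w ^ 2 + 1)^[n] z = 0} = 2 ^ n := by
  have hset : {z : ℂ | (fun w : ℂ => w ^ 2 + 1)^[n] z = 0} = (pcx n).rootSet ℂ := by
    ext z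
    rw [Polynomial.mem_rootSet]
    simp [← pcx_eval, pcx_ne_zero n, aeval_def, eval₂_eq_eval_map]
  rw [hset]
  rw [Set.ncard_eq_toFinset_card', Set.toFinset_card]
  rw [Polynomial.card_rootSet_eq_natDegree (pcx_separable n)
    (IsAlgClosed.splits _), pcx_natDegree]
end

section
/- For R(z) = z^2 - 1, define b_n = the cardinality of {z ∈ ℂ : R^n(z) = 0}. Then b_{2n} = (1 + 2^{2n+1})/3 and b_{2n+1} = (2 + 2^{2n+2})/3 for all n ≥ 0. -/
private noncomputable def mysqrt (c : ℂ) : ℂ :=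
  Classical.choose (IsAlgClosed.exists_pow_nat_eq c (n := 2) (by norm_num))

private lemma mysqrt_spec (c : ℂ) : (mysqrt c) ^ 2 = c :=
  Classical.choose_spec (IsAlgClosed.exists_pow_nat_eq c (n := 2) (by norm_num))

private lemma fiber_eq (w : ℂ) :
    (fun z : ℂ => z ^ 2 - 1) ⁻¹' {w} = {mysqrt (w + 1), -mysqrt (w + 1)} := by
  have hs := mysqrt_spec (w + 1)
  ext z
  simp only [Set.mem_preimage, Set.mem_singleton_iff, Set.mem_insert_iff]
  constructor
  · intro h
    have h2 : (z - mysqrt (w + 1)) * (z + mysqrt (w + 1)) = 0 := by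
      linear_combination h - hs
    rcases mul_eq_zero.1 h2 with h3 | h3
    · left; linear_combination h3
    · right; linear_combination h3
  · rintro (rfl | rfl) <;> linear_combination hs

open Classical in
private lemma key (F : Finset ℂ) :
    ((fun z : ℂ => z ^ 2 - 1) ⁻¹' ↑F).Finite ∧
      ((fun z : ℂ => z ^ 2 - 1) ⁻¹' ↑F).ncard + (if (-1 : ℂ) ∈ F then 1 else 0)
        = 2 * F.card := by
  classical
  induction F using Finset.induction_on with
  | empty => simp
  | @insert a T haT ih =>
    obtain ⟨ihfin, ihcard⟩ := ih
    have hsplit : (fun z : ℂ => z ^ 2 - 1) ⁻¹' ↑(insert a T)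
        = ((fun z : ℂ => z ^ 2 - 1) ⁻¹' {a}) ∪ ((fun z : ℂ => z ^ 2 - 1) ⁻¹' ↑T) := by
      rw [← Set.preimage_union, Finset.coe_insert, Set.insert_eq]
    have hfibfin : ((fun z : ℂ => z ^ 2 - 1) ⁻¹' {a}).Finite := by
      rw [fiber_eq]; exact (Set.finite_singleton _).insert _
    have hdisj : Disjoint ((fun z : ℂ => z ^ 2 - 1) ⁻¹' {a})
        ((fun z : ℂ => z ^ 2 - 1) ⁻¹' ↑T) := by
      rw [Set.disjoint_left]
      intro z hz hz'
      simp only [Set.mem_preimage, Set.mem_singleton_iff] at hz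
      simp only [Set.mem_preimage, Finset.mem_coe] at hz'
      exact haT (hz ▸ hz')
    have hfin : ((fun z : ℂ => z ^ 2 - 1) ⁻¹' ↑(insert a T)).Finite := by
      rw [hsplit]; exact hfibfin.union ihfin
    refine ⟨hfin, ?_⟩
    have hcardU : ((fun z : ℂ => z ^ 2 - 1) ⁻¹' ↑(insert a T)).ncard
        = ((fun z : ℂ => z ^ 2 - 1) ⁻¹' {a}).ncard
          + ((fun z : ℂ => z ^ 2 - 1) ⁻¹' ↑T).ncard := by
      rw [hsplit]; exact Set.ncard_union_eq hdisj hfibfin ihfin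
    have hTcard : (insert a T).card = T.card + 1 := Finset.card_insert_of_notMem haT
    rw [hcardU, hTcard]
    by_cases ha : a = -1
    · subst ha
      have hfib : ((fun z : ℂ => z ^ 2 - 1) ⁻¹' {(-1 : ℂ)}).ncard = 1 := by
        rw [fiber_eq]
        have h0 : mysqrt ((-1 : ℂ) + 1) = 0 := by
          have h : mysqrt ((-1 : ℂ) + 1) ^ 2 = 0 := by
            rw [mysqrt_spec]; ring
          exact pow_eq_zero_iff (two_ne_zero) |>.1 h
        rw [h0]
        simp
      have hmem : (-1 : ℂ) ∉ T := haT
      rw [hfib, if_pos (Finset.mem_insert_self _ _), if_neg hmem] at *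
      omega
    · have hfib : ((fun z : ℂ => z ^ 2 - 1) ⁻¹' {a}).ncard = 2 := by
        rw [fiber_eq]
        apply Set.ncard_pair
        intro h
        have h0 : mysqrt (a + 1) = 0 := by
          have h2 : (2 : ℂ) * mysqrt (a + 1) = 0 := by linear_combination h
          simpa using h2
        apply ha
        have h := mysqrt_spec (a + 1)
        rw [h0] at h
        have : a + 1 = 0 := by simpa using h.symm
        linear_combination this
      rw [hfib]
      by_cases hm : (-1 : ℂ) ∈ T
      · rw [if_pos (Finset.mem_insert_of_mem hm), if_pos hm] at *
        omega
      · have : (-1 : ℂ) ∉ insert a T := by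
          simp only [Finset.mem_insert]
          push_neg
          exact ⟨fun h => ha h.symm, hm⟩
        rw [if_neg this, if_neg hm] at *
        omega

open Classical in
private lemma key' (S : Set ℂ) (hS : S.Finite) :
    ((fun z : ℂ => z ^ 2 - 1) ⁻¹' S).Finite ∧
      ((fun z : ℂ => z ^ 2 - 1) ⁻¹' S).ncard + (if (-1 : ℂ) ∈ S then 1 else 0)
        = 2 * S.ncard := by
  obtain ⟨F, rfl⟩ : ∃ F : Finset ℂ, ↑F = S := ⟨hS.toFinset, hS.coe_toFinset⟩
  obtain ⟨h1, h2⟩ := key F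
  refine ⟨h1, ?_⟩
  rw [Set.ncard_coe_finset]
  by_cases hm : (-1 : ℂ) ∈ F
  · rw [if_pos hm] at h2
    rw [if_pos (by simpa using hm)]
    exact h2
  · rw [if_neg hm] at h2
    rw [if_neg (by simpa using hm)]
    exact h2

private lemma iter_neg_one (n : ℕ) :
    (fun z : ℂ => z ^ 2 - 1)^[2 * n] (-1) = -1 := by
  induction n with
  | zero => simp
  | succ k ih =>
    rw [show 2 * (k + 1) = 2 * k + 1 + 1 by ring, Function.iterate_succ_apply,
      Function.iterate_succ_apply]
    rw [show (((-1 : ℂ) ^ 2 - 1) ^ 2 - 1) = -1 by norm_num]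
    exact ih

open Classical in
/-- For `R(z) = z^2 - 1`, let `b n` be the number of distinct complex solutions of
`R^[n] z = 0`. Then `b (2n) = (1 + 2^(2n+1))/3` and `b (2n+1) = (2 + 2^(2n+2))/3`,
stated without division as `3 * b (2n) = 1 + 2^(2n+1)` etc. -/
theorem stmt_2 (b : ℕ → ℕ)
    (hb : ∀ n, b n = Set.ncard {z : ℂ | (fun w : ℂ => w ^ 2 - 1)^[n] z = 0}) :
    ∀ n : ℕ, 3 * b (2 * n) = 1 + 2 ^ (2 * n + 1) ∧
      3 * b (2 * n + 1) = 2 + 2 ^ (2 * n + 2) := by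
  have hSrec : ∀ m : ℕ, {z : ℂ | (fun w : ℂ => w ^ 2 - 1)^[m + 1] z = 0}
      = (fun w : ℂ => w ^ 2 - 1) ⁻¹' {z : ℂ | (fun w : ℂ => w ^ 2 - 1)^[m] z = 0} := by
    intro m
    ext z
    simp [Function.iterate_succ_apply]
  have hfin : ∀ m : ℕ, {z : ℂ | (fun w : ℂ => w ^ 2 - 1)^[m] z = 0}.Finite := by
    intro m
    induction m with
    | zero => simpa using Set.finite_singleton (0 : ℂ)
    | succ k ih =>
      rw [hSrec k]
      exact (key' _ ih).1
  have hrec : ∀ m : ℕ,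
      b (m + 1) + (if (-1 : ℂ) ∈ {z : ℂ | (fun w : ℂ => w ^ 2 - 1)^[m] z = 0} then 1 else 0)
      = 2 * b m := by
    intro m
    rw [hb, hb, hSrec m]
    exact (key' _ (hfin m)).2
  have hmemeven : ∀ k : ℕ, (-1 : ℂ) ∉ {z : ℂ | (fun w : ℂ => w ^ 2 - 1)^[2 * k] z = 0} := by
    intro k h
    simp only [Set.mem_setOf_eq] at h
    rw [iter_neg_one] at h
    norm_num at h
  have hmemodd : ∀ k : ℕ, (-1 : ℂ) ∈ {z : ℂ | (fun w : ℂ => w ^ 2 - 1)^[2 * k + 1] z = 0} := by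
    intro k
    simp only [Set.mem_setOf_eq, Function.iterate_succ_apply']
    rw [iter_neg_one k]
    norm_num
  have hb0 : b 0 = 1 := by
    rw [hb]
    simp only [Function.iterate_zero, id_eq]
    rw [show {z : ℂ | z = 0} = {(0 : ℂ)} from rfl]
    exact Set.ncard_singleton 0
  intro n
  induction n with
  | zero =>
    have h1 := hrec 0
    rw [if_neg (hmemeven 0)] at h1
    norm_num at h1 ⊢
    omega
  | succ k ih =>
    obtain ⟨ih1, ih2⟩ := ih
    have h1 := hrec (2 * k + 1)
    rw [if_pos (hmemodd k)] at h1
    have h2 := hrec (2 * k + 2)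
    rw [show (2 : ℕ) * k + 2 = 2 * (k + 1) by ring, if_neg (hmemeven (k + 1))] at h2
    rw [show (2 : ℕ) * (k + 1) = 2 * k + 2 by ring] at h2
    have p1 : (2 : ℕ) ^ (2 * k + 2) = 2 * 2 ^ (2 * k + 1) := by ring
    rw [p1] at ih2
    have p2 : (2 : ℕ) ^ (2 * (k + 1) + 1) = 4 * 2 ^ (2 * k + 1) := by
      rw [show 2 * (k + 1) + 1 = (2 * k + 1) + 2 by ring]; ring
    have p3 : (2 : ℕ) ^ (2 * (k + 1) + 2) = 8 * 2 ^ (2 * k + 1) := by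
      rw [show 2 * (k + 1) + 2 = (2 * k + 1) + 3 by ring]; ring
    rw [p2, p3]
    simp only [show 2 * (k + 1) = 2 * k + 2 by ring, show 2 * k + 1 + 1 = 2 * k + 2 by ring,
      show 2 * k + 2 + 1 = 2 * k + 3 by ring] at h1 h2 ⊢
    generalize (2 : ℕ) ^ (2 * k + 1) = q at ih1 ih2 ⊢
    omega
end

section
/- Let f_m be defined by f_1 = 1, f_{m+1}(x) = x f_m(x)^2 + 1, and for m ≥ 2 set c_m = min{x ∈ ℝ : f_m(x) = 0} (the minimum exists). Then c_2 = -1 and the sequence is strictly decreasing: c_{m+1} < c_m for all m ≥ 2. -/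
open Polynomial Filter

/-- With `f 1 = 1`, `f (m+1) = X * (f m)^2 + 1` over `ℝ`, for `m ≥ 2` let
`c m` be the minimum of the real zero set of `f m` (which exists).
Then `c 2 = -1` and `c (m+1) < c m` for all `m ≥ 2`. -/
theorem stmt_6 (f : ℕ → Polynomial ℝ) (h1 : f 1 = 1)
    (hrec : ∀ m : ℕ, 1 ≤ m → f (m + 1) = X * (f m) ^ 2 + 1)
    (c : ℕ → ℝ)
    (hc : ∀ m : ℕ, 2 ≤ m → IsLeast {x : ℝ | (f m).eval x = 0} (c m)) :
    c 2 = -1 ∧ ∀ m : ℕ, 2 ≤ m → c (m + 1) < c m := by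
  -- monicity
  have hmon : ∀ m : ℕ, 1 ≤ m → (f m).Monic := by
    intro m hm
    induction m with
    | zero => omega
    | succ n ih =>
      rcases Nat.lt_or_ge n 1 with h | hn
      · have : n = 0 := by omega
        subst this; rw [h1]; exact monic_one
      · skip
        have := ih hn
        have hg : (X * (f n) ^ 2).Monic := monic_X.mul (this.pow 2)
        have hdg : (0 : WithBot ℕ) < (X * (f n) ^ 2).degree := by
          rw [degree_eq_natDegree hg.ne_zero]
          have : 1 ≤ (X * (f n) ^ 2).natDegree := by
            rw [natDegree_mul (X_ne_zero) (pow_ne_zero 2 this.ne_zero), natDegree_X]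
            omega
          exact_mod_cast this
        rw [hrec n hn]
        exact hg.add_of_left (by simpa using hdg)
  have key : ∀ m : ℕ, 2 ≤ m → c (m + 1) < c m := by
    intro m hm
    have hm1 : 1 ≤ m := by omega
    have hfm := hmon m hm1
    have hP := hrec m hm1
    set P := f (m + 1) with hPdef
    have hPm : P.Monic := hmon (m + 1) (by omega)
    -- natDegree of P is odd and positive
    have hdP : P.natDegree = 2 * (f m).natDegree + 1 := by
      rw [hP, natDegree_add_eq_left_of_degree_lt, natDegree_mul X_ne_zero
        (pow_ne_zero 2 hfm.ne_zero), natDegree_X, natDegree_pow]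
      · ring
      · have hg : (X * (f m) ^ 2).Monic := monic_X.mul (hfm.pow 2)
        rw [degree_one, degree_eq_natDegree hg.ne_zero, natDegree_mul X_ne_zero
          (pow_ne_zero 2 hfm.ne_zero), natDegree_X]
        exact_mod_cast Nat.succ_le_of_lt (Nat.lt_of_lt_of_le Nat.zero_lt_one (by omega))
    -- f(m+1)(c m) = 1
    have hcm := hc m hm
    have hroot : (f m).eval (c m) = 0 := hcm.1
    have hevalcm : P.eval (c m) = 1 := by
      rw [hP]; simp [hroot]
    -- Q = P ∘ (-X) tends to -∞ at +∞
    have hQlead : (P.comp (-X)).leadingCoeff = -1 := by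
      rw [leadingCoeff_comp (by simp : (-X : ℝ[X]).natDegree ≠ 0)]
      simp [hPm.leadingCoeff, hdP, pow_succ, pow_mul]
    have hQdeg : 0 < (P.comp (-X)).degree := by
      have hne : (P.comp (-X)) ≠ 0 := fun h => by simpa [h] using hQlead
      rw [degree_eq_natDegree hne, natDegree_comp]
      simp only [natDegree_neg, natDegree_X, mul_one]
      exact_mod_cast (by omega : 0 < P.natDegree)
    have htend : Tendsto (fun x => (P.comp (-X)).eval x) atTop atBot :=
      Polynomial.tendsto_atBot_of_leadingCoeff_nonpos _ hQdeg (by rw [hQlead]; norm_num)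
    -- find y < c m with P.eval y < 0
    have h1' : ∀ᶠ x in atTop, (P.comp (-X)).eval x < 0 := htend.eventually (eventually_lt_atBot 0)
    have h2' : ∀ᶠ x in atTop, -x < c m := by
      filter_upwards [eventually_gt_atTop (-c m)] with x hx; linarith
    obtain ⟨x, hx1, hx2⟩ := (h1'.and h2').exists
    have hy : P.eval (-x) < 0 := by simpa using hx1
    -- IVT
    have hcont : ContinuousOn (fun t => P.eval t) (Set.Icc (-x) (c m)) :=
      (Polynomial.continuous P).continuousOn
    have : (0 : ℝ) ∈ Set.Icc (P.eval (-x)) (P.eval (c m)) := by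
      constructor <;> [linarith; (rw [hevalcm]; norm_num)]
    obtain ⟨z, hz1, hz2⟩ := intermediate_value_Icc (le_of_lt hx2) hcont this
    have hzlt : z < c m := by
      rcases lt_or_eq_of_le hz1.2 with h | h
      · exact h
      · exfalso; simp only [h, hevalcm] at hz2; norm_num at hz2
    have := (hc (m + 1) (by omega)).2 (by exact hz2 : z ∈ {x : ℝ | (f (m+1)).eval x = 0})
    linarith
  refine ⟨?_, key⟩
  have hf2 : f 2 = X + 1 := by rw [hrec 1 le_rfl, h1]; ring
  have := (hc 2 le_rfl).1
  rw [hf2] at this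
  simp at this
  linarith [this]
end

section
/- For every m ≥ 2 there exists a real constant c such that for the quadratic map R(z) = z^2 + c one has R^m(0) = 0 while R^k(0) ≠ 0 for all k = 1, …, m−1 (i.e., 0 is periodic of exact period m). -/
noncomputable section

private def gg (n : ℕ) (c : ℝ) : ℝ := (fun z : ℝ => z ^ 2 + c)^[n] 0

private lemma gg_zero (c : ℝ) : gg 0 c = 0 := rfl

private lemma gg_succ (n : ℕ) (c : ℝ) : gg (n + 1) c = (gg n c) ^ 2 + c := by
  unfold gg; rw [Function.iterate_succ_apply']

private lemma gg_one (c : ℝ) : gg 1 c = c := by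
  rw [gg_succ, gg_zero]; ring

private lemma gg_cont (n : ℕ) : Continuous (fun c => gg n c) := by
  induction n with
  | zero => simpa [gg_zero] using (continuous_const : Continuous fun _ : ℝ => (0:ℝ))
  | succ n ih => simp only [gg_succ]; exact (ih.pow 2).add continuous_id

private lemma gg_neg2 (n : ℕ) (hn : 2 ≤ n) : gg n (-2) = 2 := by
  induction n with
  | zero => omega
  | succ n ih =>
    rcases Nat.lt_or_ge n 2 with h | h
    · interval_cases n
      · omega
      · rw [gg_succ, gg_one]; norm_num
    · rw [gg_succ, ih h]; norm_num

private lemma gg_escape {c : ℝ} (hc : c < -2) (n : ℕ) (hn : 2 ≤ n) : -c < gg n c := by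
  induction n with
  | zero => omega
  | succ n ih =>
    rcases Nat.lt_or_ge n 2 with h | h
    · interval_cases n
      · omega
      · rw [gg_succ, gg_one]; nlinarith
    · have h2 := ih h
      rw [gg_succ]; nlinarith [sq_nonneg (gg n c + c), sq_nonneg (gg n c - c)]

private lemma root_ge {n : ℕ} (hn : 1 ≤ n) {c : ℝ} (h : gg n c = 0) : -2 ≤ c := by
  by_contra hc
  push_neg at hc
  rcases Nat.lt_or_ge n 2 with h2 | h2
  · have hn1 : n = 1 := by omega
    subst hn1
    rw [gg_one] at h; linarith
  · have := gg_escape hc n h2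
    rw [h] at this; linarith

private def S (n : ℕ) : Set ℝ := {c | gg n c = 0}

private lemma S_bdd (n : ℕ) (hn : 1 ≤ n) : BddBelow (S n) :=
  ⟨-2, fun _ hc => root_ge hn hc⟩

private lemma S_closed (n : ℕ) : IsClosed (S n) :=
  isClosed_eq (gg_cont n) continuous_const

private lemma sInf_S1 : sInf (S 1) = 0 := by
  have h : S 1 = {0} := by
    ext c; simp [S, gg_one]
  rw [h, csInf_singleton]

private lemma main (m : ℕ) (hm : 2 ≤ m) :
    (S m).Nonempty ∧ sInf (S m) ≤ -1 ∧
      ∀ k, 1 ≤ k → k < m → sInf (S m) < sInf (S k) := by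
  induction m with
  | zero => omega
  | succ m ih =>
    rcases Nat.lt_or_ge m 2 with h2 | h2
    · -- base case m + 1 = 2
      have hm1 : m = 1 := by omega
      subst hm1
      have hmem : (-1 : ℝ) ∈ S 2 := by
        show gg 2 (-1) = 0
        rw [gg_succ, gg_one]; norm_num
      have hne : (S 2).Nonempty := ⟨-1, hmem⟩
      have hle : sInf (S 2) ≤ -1 := csInf_le (S_bdd 2 (by norm_num)) hmem
      refine ⟨hne, hle, ?_⟩
      intro k hk1 hk2
      have hk : k = 1 := by omega
      subst hk
      rw [sInf_S1]; linarith
    · -- inductive step, m ≥ 2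
      obtain ⟨hne, hle, hlt⟩ := ih h2
      set c := sInf (S m) with hc
      have hcmem : c ∈ S m := (S_closed m).csInf_mem hne (S_bdd m (by omega))
      have hcg : gg m c = 0 := hcmem
      have hc2 : -2 < c := by
        rcases lt_or_eq_of_le (root_ge (by omega) hcg) with h | h
        · exact h
        · exfalso
          have := gg_neg2 m h2
          rw [h] at this
          rw [hcg] at this; norm_num at this
      have hgc : gg (m + 1) c = c := by rw [gg_succ, hcg]; ring
      have hgneg2 : gg (m + 1) (-2) = 2 := gg_neg2 (m + 1) (by omega)
      -- IVT on [-2, c]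
      have hcont : ContinuousOn (fun x => gg (m + 1) x) (Set.Icc (-2) c) :=
        (gg_cont (m + 1)).continuousOn
      have hsub := intermediate_value_Icc' (le_of_lt hc2) hcont
      have h0 : (0 : ℝ) ∈ Set.Icc (gg (m + 1) c) (gg (m + 1) (-2)) := by
        rw [hgc, hgneg2]
        constructor <;> linarith
      obtain ⟨x, hxIcc, hx0'⟩ := hsub h0
      have hx0 : gg (m + 1) x = 0 := hx0'
      have hxne2 : x ≠ -2 := by
        intro h; rw [h, hgneg2] at hx0; norm_num at hx0
      have hxnec : x ≠ c := by
        intro h; rw [h, hgc] at hx0; linarith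
      have hxlt : x < c := lt_of_le_of_ne hxIcc.2 hxnec
      have hxmem : x ∈ S (m + 1) := hx0
      have hne' : (S (m + 1)).Nonempty := ⟨x, hxmem⟩
      have hle' : sInf (S (m + 1)) ≤ x := csInf_le (S_bdd (m + 1) (by omega)) hxmem
      refine ⟨hne', by linarith, ?_⟩
      intro k hk1 hk2
      rcases Nat.lt_or_ge k m with hkm | hkm
      · have := hlt k hk1 hkm
        linarith
      · have hk : k = m := by omega
        subst hk
        linarith

end

/-- For every `m ≥ 2` there exists a real constant `c` such that for
`R(z) = z^2 + c` one has `R^[m] 0 = 0` while `R^[k] 0 ≠ 0` for `1 ≤ k ≤ m - 1`. -/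
theorem stmt_8 (m : ℕ) (hm : 2 ≤ m) :
    ∃ c : ℝ, (fun z : ℝ => z ^ 2 + c)^[m] 0 = 0 ∧
      ∀ k : ℕ, 1 ≤ k → k ≤ m - 1 → (fun z : ℝ => z ^ 2 + c)^[k] 0 ≠ 0 := by
  obtain ⟨hne, _, hlt⟩ := main m hm
  refine ⟨sInf (S m), ?_, ?_⟩
  · exact (S_closed m).csInf_mem hne (S_bdd m (by omega))
  · intro k hk1 hk2 hk0
    have hkm : k < m := by omega
    have h1 : sInf (S m) < sInf (S k) := hlt k hk1 hkm
    have h2 : sInf (S k) ≤ sInf (S m) := csInf_le (S_bdd k hk1) hk0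
    linarith
end

section
/- Let c ∈ ℂ and R(z) = z^2 + c be such that R^m(0) = 0 and R^k(0) ≠ 0 for 1 ≤ k ≤ m−1 (0 has exact period m, m ≥ 2). Then b_n(0) := |R^{-n}(0)| satisfies b_n(0) = 2^n for 0 ≤ n ≤ m−1 and b_m(0) = 2^m − 1. -/
open Set
open scoped Classical

private lemma sq_set_card (d : ℂ) :
    {w : ℂ | w ^ 2 = d}.Finite ∧ {w : ℂ | w ^ 2 = d}.ncard = if d = 0 then 1 else 2 := by
  by_cases hd : d = 0
  · subst hd
    have h : {w : ℂ | w ^ 2 = 0} = {(0 : ℂ)} := by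
      ext w; simp [pow_eq_zero_iff]
    rw [h]; simp
  · obtain ⟨e, he⟩ := IsAlgClosed.exists_pow_nat_eq d (n := 2) (by norm_num)
    have he0 : e ≠ 0 := by rintro rfl; simp at he; exact hd he.symm
    have hne : e ≠ -e := by
      intro h
      apply he0
      have h2 : (2 : ℂ) * e = 0 := by linear_combination h
      rcases mul_eq_zero.mp h2 with h' | h'
      · exact absurd h' (by norm_num)
      · exact h'
    have h : {w : ℂ | w ^ 2 = d} = {e, -e} := by
      ext w
      simp only [Set.mem_setOf_eq, Set.mem_insert_iff, Set.mem_singleton_iff]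
      constructor
      · intro hw
        have hz : (w - e) * (w + e) = 0 := by
          have hwe : w ^ 2 = e ^ 2 := by rw [hw, he]
          linear_combination hwe
        rcases mul_eq_zero.mp hz with h' | h'
        · exact Or.inl (sub_eq_zero.mp h')
        · exact Or.inr (eq_neg_of_add_eq_zero_left h')
      · rintro (rfl | rfl)
        · exact he
        · rw [← he]; ring
    rw [h]
    simp only [hd, if_false]
    exact ⟨Set.toFinite _, Set.ncard_pair hne⟩

private lemma fiber_card (c a : ℂ) :
    {w : ℂ | w ^ 2 + c = a}.Finite ∧
      {w : ℂ | w ^ 2 + c = a}.ncard = if a = c then 1 else 2 := by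
  have h : {w : ℂ | w ^ 2 + c = a} = {w : ℂ | w ^ 2 = a - c} := by
    ext w; simp [eq_sub_iff_add_eq]
  rw [h]
  obtain ⟨h1, h2⟩ := sq_set_card (a - c)
  refine ⟨h1, ?_⟩
  rw [h2]
  simp only [sub_eq_zero]

private lemma count_preimage (c : ℂ) (S : Set ℂ) (hS : S.Finite) :
    ((fun z : ℂ => z ^ 2 + c) ⁻¹' S).Finite ∧
      ((fun z : ℂ => z ^ 2 + c) ⁻¹' S).ncard =
        2 * S.ncard - (if c ∈ S then 1 else 0) := by
  classical
  have hUnion : (fun z : ℂ => z ^ 2 + c) ⁻¹' S = ⋃ a ∈ S, {w : ℂ | w ^ 2 + c = a} := by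
    ext w; simp
  have hfin : ((fun z : ℂ => z ^ 2 + c) ⁻¹' S).Finite := by
    rw [hUnion]
    exact hS.biUnion (fun a _ => (fiber_card c a).1)
  refine ⟨hfin, ?_⟩
  set T := hfin.toFinset with hT
  set S' := hS.toFinset with hS'
  have hcardT : ((fun z : ℂ => z ^ 2 + c) ⁻¹' S).ncard = T.card :=
    Set.ncard_eq_toFinset_card _ hfin
  have hcardS : S.ncard = S'.card := Set.ncard_eq_toFinset_card _ hS
  have hmemS' : ∀ a, a ∈ S' ↔ a ∈ S := fun a => hS.mem_toFinset
  have key : T.card = ∑ a ∈ S', (T.filter fun w => w ^ 2 + c = a).card := by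
    apply Finset.card_eq_sum_card_fiberwise (f := fun w => w ^ 2 + c)
    intro w hw
    rw [Finset.mem_coe, hmemS']
    have := hfin.mem_toFinset.mp hw
    exact this
  have hfilt : ∀ a ∈ S', (T.filter fun w => w ^ 2 + c = a).card = if a = c then 1 else 2 := by
    intro a ha
    have hset : ((T.filter fun w => w ^ 2 + c = a) : Set ℂ) = {w : ℂ | w ^ 2 + c = a} := by
      ext w
      simp only [Finset.coe_filter, Set.mem_setOf_eq, hT, Set.Finite.mem_toFinset,
        Set.mem_preimage, Set.mem_setOf_eq]
      constructor
      · exact fun h => h.2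
      · intro h
        exact ⟨by rw [h]; exact (hmemS' a).mp ha, h⟩
    rw [← Set.ncard_coe_finset, hset]
    exact (fiber_card c a).2
  rw [hcardT, hcardS, key, Finset.sum_congr rfl hfilt]
  by_cases hc : c ∈ S
  · have hc' : c ∈ S' := (hmemS' c).mpr hc
    rw [if_pos hc]
    rw [← Finset.add_sum_erase _ _ hc']
    rw [if_pos rfl]
    have herase : ∑ a ∈ S'.erase c, (if a = c then 1 else 2) = 2 * (S'.card - 1) := by
      rw [Finset.sum_congr rfl (fun a ha => if_neg (Finset.mem_erase.mp ha).1),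
        Finset.sum_const, Finset.card_erase_of_mem hc', smul_eq_mul]
      ring
    rw [herase]
    have hpos : 1 ≤ S'.card := Finset.card_pos.mpr ⟨c, hc'⟩
    omega
  · have hc' : c ∉ S' := fun h => hc ((hmemS' c).mp h)
    rw [if_neg hc]
    rw [Finset.sum_congr rfl (fun a ha => if_neg (fun h : a = c => hc' (h ▸ ha))),
      Finset.sum_const, smul_eq_mul]
    omega

/-- Let `c : ℂ` and `R(z) = z^2 + c` with `R^[m] 0 = 0` and `R^[k] 0 ≠ 0` for
`1 ≤ k ≤ m - 1` (so `0` has exact period `m ≥ 2`). Then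
`b n := |R^{-n}(0)|` satisfies `b n = 2^n` for `0 ≤ n ≤ m - 1` and
`b m = 2^m - 1`. -/
theorem stmt_12 (c : ℂ) (m : ℕ) (hm : 2 ≤ m)
    (hper : (fun z : ℂ => z ^ 2 + c)^[m] 0 = 0)
    (hmin : ∀ k : ℕ, 1 ≤ k → k ≤ m - 1 → (fun z : ℂ => z ^ 2 + c)^[k] 0 ≠ 0)
    (b : ℕ → ℕ)
    (hb : ∀ n, b n = Set.ncard {w : ℂ | (fun z : ℂ => z ^ 2 + c)^[n] w = 0}) :
    (∀ n : ℕ, n ≤ m - 1 → b n = 2 ^ n) ∧ b m = 2 ^ m - 1 := by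
  set f : ℂ → ℂ := fun z => z ^ 2 + c with hf
  have hstep : ∀ n : ℕ, {w : ℂ | f^[n + 1] w = 0} = f ⁻¹' {w : ℂ | f^[n] w = 0} := by
    intro n; ext w
    simp [Function.iterate_succ_apply]
  have hc0 : f 0 = c := by simp [hf]
  have hcmem : ∀ n, c ∈ {w : ℂ | f^[n] w = 0} ↔ f^[n + 1] 0 = 0 := by
    intro n
    rw [Function.iterate_succ_apply, hc0]
    rfl
  have main : ∀ n, n ≤ m - 1 →
      {w : ℂ | f^[n] w = 0}.Finite ∧ {w : ℂ | f^[n] w = 0}.ncard = 2 ^ n := by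
    intro n
    induction n with
    | zero =>
      intro _
      have h0 : {w : ℂ | f^[0] w = 0} = {(0 : ℂ)} := by ext w; simp
      rw [h0]
      simp
    | succ n ih =>
      intro hn
      obtain ⟨hfin, hcard⟩ := ih (by omega)
      obtain ⟨hfin', hcard'⟩ := count_preimage c _ hfin
      rw [hstep n]
      refine ⟨hfin', ?_⟩
      rw [hcard', hcard]
      have hcn : c ∉ {w : ℂ | f^[n] w = 0} := by
        rw [hcmem]
        exact hmin (n + 1) (by omega) (by omega)
      rw [if_neg hcn]
      rw [pow_succ]
      omega
  refine ⟨fun n hn => by rw [hb n]; exact (main n hn).2, ?_⟩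
  rw [hb m]
  obtain ⟨hfin, hcard⟩ := main (m - 1) le_rfl
  obtain ⟨hfin', hcard'⟩ := count_preimage c _ hfin
  have hm1 : m - 1 + 1 = m := by omega
  have hSm := hstep (m - 1)
  rw [hm1] at hSm
  rw [hSm, hcard', hcard]
  have hcm : c ∈ {w : ℂ | f^[m - 1] w = 0} := by
    rw [hcmem, hm1]
    exact hper
  rw [if_pos hcm]
  have h2m : 2 * 2 ^ (m - 1) = 2 ^ m := by
    rw [← pow_succ']
    congr 1
    try omega
  omega
end

section
/- Let A be a unital C*-algebra and X a Hilbert C*-bimodule over A with a finite basis (normalized tight frame) {u_1, …, u_k}, i.e., x = Σ_i u_i⟨u_i, x⟩_A for all x ∈ X. Then for any tracial positive linear functional τ on A, the value Σ_{i=1}^k τ(⟨u_i, u_i⟩_A) is independent of the choice of finite basis. -/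
/-- Let `A` be a (C*-)algebra with involution, `X` a right `A`-module (with
right action `smul : X → A → X`) equipped with an `A`-valued inner product
`inner : X → X → A`, linear in the second variable, satisfying
`⟨x, y·a⟩ = ⟨x,y⟩ a` and `star ⟨x,y⟩ = ⟨y,x⟩`. If `{u i}` and `{v j}` are two
finite bases (normalized tight frames), i.e. `x = ∑ i, u i · ⟨u i, x⟩` for all
`x`, then for any tracial (positive) linear functional `τ` on `A`,
`∑ i, τ ⟨u i, u i⟩ = ∑ j, τ ⟨v j, v j⟩`: the value is independent of the basis. -/
theorem stmt_19 {A X : Type*} [Ring A] [StarRing A] [Algebra ℂ A]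
    [AddCommGroup X]
    (smul : X → A → X) (inner : X → X → A)
    (hinner_add : ∀ x y z : X, inner x (y + z) = inner x y + inner x z)
    (hinner_smul : ∀ (x y : X) (a : A), inner x (smul y a) = inner x y * a)
    (hinner_star : ∀ x y : X, star (inner x y) = inner y x)
    (τ : A →ₗ[ℂ] ℂ)
    (hτ_pos : ∀ a : A, 0 ≤ (τ (star a * a)).re)
    (hτ_tr : ∀ a b : A, τ (a * b) = τ (b * a))
    (n k : ℕ) (u : Fin n → X) (v : Fin k → X)
    (hu : ∀ x : X, x = ∑ i, smul (u i) (inner (u i) x))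
    (hv : ∀ x : X, x = ∑ j, smul (v j) (inner (v j) x)) :
    ∑ i, τ (inner (u i) (u i)) = ∑ j, τ (inner (v j) (v j)) := by
  have hsum : ∀ (x : X) (s : Finset (Fin k)) (f : Fin k → X),
      inner x (∑ j ∈ s, f j) = ∑ j ∈ s, inner x (f j) := by
    intro x s f
    exact map_sum (AddMonoidHom.mk' (inner x) (hinner_add x)) f s
  have hsum' : ∀ (x : X) (s : Finset (Fin n)) (f : Fin n → X),
      inner x (∑ i ∈ s, f i) = ∑ i ∈ s, inner x (f i) := by
    intro x s f
    exact map_sum (AddMonoidHom.mk' (inner x) (hinner_add x)) f s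
  have key : ∑ i, τ (inner (u i) (u i))
      = ∑ i, ∑ j, τ (inner (u i) (v j) * inner (v j) (u i)) := by
    refine Finset.sum_congr rfl fun i _ => ?_
    rw [show inner (u i) (u i) = inner (u i) (∑ j, smul (v j) (inner (v j) (u i))) by
      rw [← hv], hsum, map_sum]
    refine Finset.sum_congr rfl fun j _ => ?_
    rw [hinner_smul]
  have key2 : ∑ j, τ (inner (v j) (v j))
      = ∑ j, ∑ i, τ (inner (v j) (u i) * inner (u i) (v j)) := by
    refine Finset.sum_congr rfl fun j _ => ?_
    rw [show inner (v j) (v j) = inner (v j) (∑ i, smul (u i) (inner (u i) (v j))) by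
      rw [← hu], hsum', map_sum]
    refine Finset.sum_congr rfl fun i _ => ?_
    rw [hinner_smul]
  rw [key, key2, Finset.sum_comm]
  exact Finset.sum_congr rfl fun j _ => Finset.sum_congr rfl fun i _ => hτ_tr _ _
end
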